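/- arXiv:2105.06570 — 7 statements merged into one kernel-verified Lean document; each statement's English description precedes it below -/
import Mathlib

section
/- Let W be a set, π : W → [0,1] a possibility distribution, and for f : W → [0,1] define N(f) = inf_{w∈W} (π(w) ⇒_G f(w)) and Π(f) = sup_{w∈W} min(π(w), f(w)), where ⇒_G is the Gödel implication. Then for any f, g : W → [0,1], N(λw. f(w) ⇒_G g(w)) ≤ (N(f) ⇒_G N(g)). (Validity of axiom K_□ in possibilistic Gödel models.) -/
open scoped Classical

instance : Fact ((0:ℝ) ≤ 1) := ⟨zero_le_one⟩

/-- Gödel implication on the unit interval. -/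
noncomputable def gimp (x y : unitInterval) : unitInterval := if x ≤ y then 1 else y

/-- Necessity measure induced by a possibility distribution `π`. -/
noncomputable def Nec {W : Type*} (π f : W → unitInterval) : unitInterval :=
  ⨅ w, gimp (π w) (f w)

/-- Possibility measure induced by a possibility distribution `π`. -/
noncomputable def Pos {W : Type*} (π f : W → unitInterval) : unitInterval :=
  ⨆ w, min (π w) (f w)

lemma gimp_resid (x y z : unitInterval) : x ≤ gimp y z ↔ min x y ≤ z := by
  unfold gimp
  split_ifs with h
  · constructor
    · intro _; exact le_trans (min_le_right x y) h
    · intro _; exact unitInterval.le_one x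
  · constructor
    · intro hx; exact le_trans (min_le_left x y) hx
    · intro hm; exact (min_le_iff.mp hm).resolve_right h

theorem stmt2 {W : Type*} [Nonempty W] (π f g : W → unitInterval) :
    Nec π (fun w => gimp (f w) (g w)) ≤ gimp (Nec π f) (Nec π g) := by
  rw [gimp_resid]
  unfold Nec
  apply le_iInf
  intro w
  rw [gimp_resid]
  have hA0 : (⨅ w, gimp (π w) (gimp (f w) (g w))) ≤ gimp (π w) (gimp (f w) (g w)) := iInf_le _ w
  have hA := (gimp_resid _ _ _).mp hA0
  have hN : (⨅ w, gimp (π w) (f w)) ≤ gimp (π w) (f w) := iInf_le _ w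
  have hf := (gimp_resid _ _ _).mp hN
  have h2 := (gimp_resid _ _ _).mp hA
  refine le_trans (le_min ?_ ?_) h2
  · exact le_min (le_trans (min_le_left _ _) (min_le_left _ _)) (min_le_right _ _)
  · exact le_trans (min_le_min (min_le_right _ _) le_rfl) hf
end

section
/- Fischer Servi axiom FS2 is valid in possibilistic Gödel models: for any π : W → [0,1] and any f, g : W → [0,1], (Π(f) ⇒_G N(g)) ≤ N(λw. f(w) ⇒_G g(w)), where ⇒_G is the Gödel implication, N(h) = inf_w (π(w) ⇒_G h(w)) and Π(h) = sup_w min(π(w), h(w)). -/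
open scoped Classical

lemma gimp_of_le {x y : unitInterval} (h : x ≤ y) : gimp x y = 1 := if_pos h

lemma gimp_of_not_le {x y : unitInterval} (h : ¬ x ≤ y) : gimp x y = y := if_neg h

theorem stmt6 {W : Type*} [Nonempty W] (π f g : W → unitInterval) :
    gimp (Pos π f) (Nec π g) ≤ Nec π (fun w => gimp (f w) (g w)) := by
  apply le_iInf
  intro w
  show gimp (Pos π f) (Nec π g) ≤ gimp (π w) (gimp (f w) (g w))
  by_cases h1 : π w ≤ gimp (f w) (g w)
  · rw [gimp_of_le h1]
    exact unitInterval.le_one'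
  · push_neg at h1
    have hfg : ¬ f w ≤ g w := by
      intro h
      rw [gimp_of_le h] at h1
      exact absurd unitInterval.le_one' (not_le.mpr h1)
    have hg : gimp (f w) (g w) = g w := gimp_of_not_le hfg
    rw [hg] at h1
    rw [hg, gimp_of_not_le (not_le.mpr h1)]
    have hB : Nec π g ≤ g w := by
      refine iInf_le_of_le w ?_
      rw [gimp_of_not_le (not_le.mpr h1)]
    have hA : min (π w) (f w) ≤ Pos π f :=
      le_iSup (fun w => min (π w) (f w)) w
    have hAB : ¬ Pos π f ≤ Nec π g := by
      intro h
      have hlt : g w < min (π w) (f w) := lt_min h1 (lt_of_not_ge hfg)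
      exact absurd (hA.trans (h.trans hB)) (not_le.mpr hlt)
    rw [gimp_of_not_le hAB]
    exact hB
end

section
/- Axiom P is valid in possibilistic Gödel models: for any π : W → [0,1] and f, g : W → [0,1], N(λw. f(w) ⇒_G g(w)) ≤ (Π(f) ⇒_G Π(g)). -/
open scoped Classical

theorem stmt7 {W : Type*} [Nonempty W] (π f g : W → unitInterval) :
    Nec π (fun w => gimp (f w) (g w)) ≤ gimp (Pos π f) (Pos π g) := by
  rw [gimp]
  split_ifs with h
  · exact le_top
  · push_neg at h
    obtain ⟨w, hw⟩ := lt_iSup_iff.mp h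
    have hπ : Pos π g < π w := hw.trans_le (min_le_left _ _)
    have hf : Pos π g < f w := hw.trans_le (min_le_right _ _)
    have hg : g w ≤ Pos π g := by
      have hle := le_iSup (fun w => min (π w) (g w)) w
      rcases le_total (π w) (g w) with h1 | h1
      · have h2 : π w ≤ Pos π g := by rw [Pos]; simpa [min_eq_left h1] using hle
        exact absurd h2 hπ.not_ge
      · rw [Pos]
        simpa [min_eq_right h1] using hle
    calc Nec π (fun w => gimp (f w) (g w)) ≤ gimp (π w) (gimp (f w) (g w)) :=
          iInf_le _ w
      _ = g w := by
          rw [gimp, gimp, if_neg (not_le.mpr (hg.trans_lt hf))]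
          exact if_neg (not_le.mpr (hg.trans_lt hπ))
      _ ≤ Pos π g := hg
end

section
/- For any possibility distribution π : W → [0,1] and any f : W → [0,1]: (Π(const 1) ⇒_G Π(f)) = N(const Π(f)), i.e. the scheme Sk_◇ ((◇⊤ → ◇φ) ↔ □◇φ) is valid in possibilistic Gödel models: (sup_w π(w)) ⇒_G Π(f) equals inf_w (π(w) ⇒_G Π(f)). -/
open scoped Classical

theorem stmt11 {W : Type*} [Nonempty W] (π f : W → unitInterval) :
    gimp (Pos π (fun _ => 1)) (Pos π f) = Nec π (fun _ => Pos π f) := by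
  have hP1 : Pos π (fun _ => 1) = ⨆ w, π w := by
    unfold Pos; congr 1; funext w; exact min_eq_left unitInterval.le_one'
  set P := Pos π f with hP
  have hge : ∀ x : unitInterval, P ≤ gimp x P := by
    intro x; unfold gimp; split
    · exact unitInterval.le_one'
    · exact le_rfl
  rw [hP1]
  unfold Nec gimp
  by_cases h : (⨆ w, π w) ≤ P
  · rw [if_pos h]
    symm
    have : ∀ w : W, (if π w ≤ P then (1:unitInterval) else P) = 1 := fun w =>
      if_pos ((le_iSup π w).trans h)
    simp only [this, iInf_const]
  · rw [if_neg h]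
    push_neg at h
    obtain ⟨w, hw⟩ := lt_iSup_iff.mp h
    apply le_antisymm
    · exact le_iInf fun x => hge (π x)
    · calc (⨅ x, if π x ≤ P then (1:unitInterval) else P) ≤ _ := iInf_le _ w
        _ = P := by rw [if_neg (not_le.mpr hw)]
end

section
/- In the possibilistic Gödel model with W = ℕ, π(n) = 1 for all n, and e(p, n) = 1/(n+1), the formula □¬¬p → ¬¬□p evaluates to 0 at every world: one has e(□p, n) = inf_m (1 ⇒_G 1/(m+1)) = 0, e(□¬¬p, n) = 1, and hence e(□¬¬p → ¬¬□p, n) = 1 ⇒_G ¬¬0 = 0. -/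
open scoped Classical

noncomputable def gneg (x : unitInterval) : unitInterval := gimp x 0

noncomputable def fexample : ℕ → unitInterval := fun n =>
  ⟨1 / (n + 1), by positivity, by
    rw [div_le_one (by positivity)]
    linarith [Nat.cast_nonneg (α := ℝ) n]⟩

lemma fexample_pos (n : ℕ) : (0 : unitInterval) < fexample n := by
  rw [← Subtype.coe_lt_coe]
  show (0:ℝ) < 1 / (n + 1)
  positivity

lemma gneg_gneg_fexample (n : ℕ) : gneg (gneg (fexample n)) = 1 := by
  have h1 : gneg (fexample n) = 0 := by
    simp only [gneg, gimp, if_neg (not_le.mpr (fexample_pos n))]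
  rw [h1]
  simp [gneg, gimp]

lemma nec_zero : Nec (fun _ : ℕ => 1) fexample = 0 := by
  refine le_antisymm ?_ unitInterval.nonneg'
  have h : ∀ n : ℕ, Nec (fun _ : ℕ => 1) fexample ≤ fexample n := by
    intro n
    refine le_trans (iInf_le _ n) ?_
    unfold gimp
    split
    · exact le_of_eq (le_antisymm (by assumption) unitInterval.le_one')
    · exact le_rfl
  rw [← Subtype.coe_le_coe]
  show (Nec (fun _ : ℕ => 1) fexample : ℝ) ≤ 0
  by_contra hc
  push_neg at hc
  obtain ⟨n, hn⟩ := exists_nat_one_div_lt hc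
  have := h n
  rw [← Subtype.coe_le_coe] at this
  have : (Nec (fun _ : ℕ => 1) fexample : ℝ) ≤ 1 / (n + 1) := this
  linarith

theorem stmt12 :
    Nec (fun _ : ℕ => 1) fexample = 0 ∧
    Nec (fun _ : ℕ => 1) (fun n => gneg (gneg (fexample n))) = 1 ∧
    gimp (Nec (fun _ : ℕ => 1) (fun n => gneg (gneg (fexample n))))
      (gneg (gneg (Nec (fun _ : ℕ => 1) fexample))) = 0 := by
  have h1 := nec_zero
  have h2 : Nec (fun _ : ℕ => 1) (fun n => gneg (gneg (fexample n))) = 1 := by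
    unfold Nec
    simp only [gneg_gneg_fexample]
    simp [gimp]
  refine ⟨h1, h2, ?_⟩
  rw [h1, h2]
  have hg0 : gneg (0 : unitInterval) = 1 := by simp [gneg, gimp]
  have hg1 : gneg (1 : unitInterval) = 0 := by
    simp only [gneg, gimp]
    rw [if_neg]
    intro h
    have : (1:ℝ) ≤ 0 := h
    linarith
  rw [hg0, hg1]
  simp only [gimp]
  rw [if_neg]
  intro h
  have : (1:ℝ) ≤ 0 := h
  linarith
end

section
/- In any possibilistic Gödel model with finite set of worlds W, the formula □¬¬p → ¬¬□p is valid: if f : W → [0,1] and W is finite and nonempty, then N(λw. ¬¬f(w)) ≤ ¬¬N(f), where ¬x = x ⇒_G 0 and N(h) = min over w of (π(w) ⇒_G h(w)). -/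
open scoped Classical

lemma gneg_zero : gneg 0 = 1 := by simp [gneg, gimp]

lemma gneg_of_ne (x : unitInterval) (hx : x ≠ 0) : gneg x = 0 := by
  have : ¬ x ≤ 0 := fun h => hx (le_antisymm h x.2.1)
  simp [gneg, gimp, this]

theorem stmt13 {W : Type*} [Fintype W] [Nonempty W] (π f : W → unitInterval) :
    Nec π (fun w => gneg (gneg (f w))) ≤ gneg (gneg (Nec π f)) := by
  by_cases h : Nec π f = 0
  · obtain ⟨w, hw⟩ := Finite.exists_min (fun w => gimp (π w) (f w))
    have hwv : gimp (π w) (f w) = 0 := by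
      have h2 : Nec π f = gimp (π w) (f w) :=
        le_antisymm (iInf_le _ w) (le_iInf hw)
      rw [← h2, h]
    have hfw : f w = 0 ∧ ¬ (π w ≤ f w) := by
      unfold gimp at hwv
      split at hwv
      · exact absurd hwv one_ne_zero
      · exact ⟨hwv, by assumption⟩
    have key : gimp (π w) (gneg (gneg (f w))) = 0 := by
      have hπ : ¬ π w ≤ (0 : unitInterval) := by
        intro hle; exact hfw.2 (hfw.1 ▸ hle)
      rw [hfw.1, gneg_zero, gneg_of_ne 1 one_ne_zero]
      simp [gimp, hπ]
    calc Nec π (fun w => gneg (gneg (f w))) ≤ gimp (π w) (gneg (gneg (f w))) :=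
          iInf_le _ w
      _ = 0 := key
      _ ≤ _ := (gneg (gneg (Nec π f))).2.1
  · rw [gneg_of_ne _ h, gneg_zero]
    exact unitInterval.le_one _
end

section
/- Prelinearity-dependent scheme T4 is valid in possibilistic Gödel models: for any π : W → [0,1] and f, g : W → [0,1], max( N(f) ⇒_G Π(g), N(λw. (f(w) ⇒_G g(w)) ⇒_G g(w)) ) = 1. -/
open scoped Classical

theorem stmt16 {W : Type*} [Nonempty W] (π f g : W → unitInterval) :
    max (gimp (Nec π f) (Pos π g))
      (Nec π (fun w => gimp (gimp (f w) (g w)) (g w))) = 1 := by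
  rcases le_or_gt (Nec π f) (Pos π g) with h | h
  · have h1 : gimp (Nec π f) (Pos π g) = 1 := if_pos h
    rw [h1, max_eq_left unitInterval.le_one']
  · have h2 : Nec π (fun w => gimp (gimp (f w) (g w)) (g w)) = 1 := by
      refine le_antisymm unitInterval.le_one' (le_iInf fun w => ?_)
      have hkey : π w ≤ gimp (gimp (f w) (g w)) (g w) := by
        rcases le_or_gt (f w) (g w) with hfg | hfg
        · have : gimp (f w) (g w) = 1 := if_pos hfg
          rw [this]
          rcases le_or_gt 1 (g w) with hg1 | hg1
          · rw [gimp, if_pos hg1]; exact unitInterval.le_one'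
          · rw [gimp, if_neg (not_le_of_gt hg1)]
            by_contra hgp
            push_neg at hgp
            have hN : Nec π f ≤ f w := by
              have : gimp (π w) (f w) = f w :=
                if_neg (not_le_of_gt (lt_of_le_of_lt hfg hgp))
              calc Nec π f ≤ gimp (π w) (f w) := iInf_le _ w
                _ = f w := this
            have hP : g w ≤ Pos π g := by
              have : min (π w) (g w) = g w := min_eq_right hgp.le
              calc g w = min (π w) (g w) := this.symm
                _ ≤ Pos π g := le_iSup (fun w => min (π w) (g w)) w
            exact absurd (hN.trans (hfg.trans hP)) (not_le_of_gt h)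
        · have : gimp (f w) (g w) = g w := if_neg (not_le_of_gt hfg)
          rw [this, gimp, if_pos le_rfl]; exact unitInterval.le_one'
      have : gimp (π w) (gimp (gimp (f w) (g w)) (g w)) = 1 := if_pos hkey
      exact le_of_eq this.symm
    rw [h2, max_eq_right unitInterval.le_one']
end
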